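/- arXiv:1606.07636 — 3 statements merged into one kernel-verified Lean document; each statement's English description precedes it below -/
import Mathlib

section
/- For any two policies π, π' and initial distribution μ, μ(v_{π'} − v_π) = (1/(1−γ)) d_{μ,π'} (T_{π'} v_π − v_π), where d_{μ,π'} = (1−γ) μ (I − γ P_{π'})^{−1} is the γ-weighted occupancy measure. -/
/-- `I - γ Q` is nonsingular for a row-stochastic `Q` and `0 ≤ γ < 1`. -/
lemma det_one_sub_smul_stochastic_ne_zero
    {S : Type*} [Fintype S] [DecidableEq S]
    (Q : Matrix S S ℝ) (hQ0 : ∀ s s', 0 ≤ Q s s')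
    (hQ1 : ∀ s, ∑ s', Q s s' = 1) {γ : ℝ} (hγ0 : 0 ≤ γ) (hγ1 : γ < 1) :
    (1 - γ • Q).det ≠ 0 := by
  intro hdet
  obtain ⟨x, hx0, hx⟩ := (Matrix.exists_mulVec_eq_zero_iff).2 hdet
  obtain ⟨s₀, hs₀⟩ : ∃ s₀, x s₀ ≠ 0 := by
    by_contra h; push_neg at h; exact hx0 (funext h)
  have hne : (Finset.univ : Finset S).Nonempty := ⟨s₀, Finset.mem_univ _⟩
  obtain ⟨m, _, hm⟩ := Finset.exists_max_image Finset.univ (fun s => |x s|) hne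
  have hmpos : 0 < |x m| := lt_of_lt_of_le (abs_pos.2 hs₀) (hm s₀ (Finset.mem_univ _))
  have hxm : x m = γ * ∑ s', Q m s' * x s' := by
    have h := congrFun hx m
    simp only [Matrix.sub_mulVec, Matrix.smul_mulVec, Matrix.one_mulVec,
      Pi.sub_apply, Pi.smul_apply, smul_eq_mul, Pi.zero_apply] at h
    simp only [Matrix.mulVec, dotProduct] at h
    linarith
  have hb : |x m| ≤ γ * |x m| := by
    calc |x m| = γ * |∑ s', Q m s' * x s'| := by
            rw [hxm, abs_mul, abs_of_nonneg hγ0]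
      _ ≤ γ * ∑ s', Q m s' * |x m| := by
            apply mul_le_mul_of_nonneg_left _ hγ0
            calc |∑ s', Q m s' * x s'| ≤ ∑ s', |Q m s' * x s'| :=
                  Finset.abs_sum_le_sum_abs _ _
              _ ≤ ∑ s', Q m s' * |x m| := by
                  apply Finset.sum_le_sum
                  intro i _
                  rw [abs_mul, abs_of_nonneg (hQ0 m i)]
                  exact mul_le_mul_of_nonneg_left (hm i (Finset.mem_univ _)) (hQ0 m i)
      _ = γ * |x m| := by rw [← Finset.sum_mul, hQ1 m, one_mul]
  nlinarith

/-- `μ(v_{π'} − v_π) = (1/(1−γ)) d_{μ,π'} (T_{π'} v_π − v_π)`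
with `d_{μ,π'} = (1−γ) μ (I − γ P_{π'})⁻¹`. -/
theorem mean_value_difference_via_occupancy
    {S A : Type*} [Fintype S] [Fintype A] [DecidableEq S]
    (P : S → A → S → ℝ) (hP0 : ∀ s a s', 0 ≤ P s a s')
    (hP1 : ∀ s a, ∑ s', P s a s' = 1)
    (R : S → A → ℝ) (γ : ℝ) (hγ0 : 0 < γ) (hγ1 : γ < 1)
    (π π' : S → A → ℝ)
    (hπ0 : ∀ s a, 0 ≤ π s a) (hπ1 : ∀ s, ∑ a, π s a = 1)
    (hπ'0 : ∀ s a, 0 ≤ π' s a) (hπ'1 : ∀ s, ∑ a, π' s a = 1)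
    (v v' : S → ℝ)
    (hv : ∀ s, v s = (∑ a, π s a * R s a)
        + γ * ∑ s', (∑ a, π s a * P s a s') * v s')
    (hv' : ∀ s, v' s = (∑ a, π' s a * R s a)
        + γ * ∑ s', (∑ a, π' s a * P s a s') * v' s')
    (μ : S → ℝ) (hμ0 : ∀ s, 0 ≤ μ s) (hμ1 : ∑ s, μ s = 1)
    (d : S → ℝ)
    (hd : d = (1 - γ) • Matrix.vecMul μ
        (1 - γ • Matrix.of fun s s' => ∑ a, π' s a * P s a s')⁻¹) :
    ∑ s, μ s * (v' s - v s)
      = (1 / (1 - γ)) * ∑ s, d s * (((∑ a, π' s a * R s a)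
          + γ * ∑ s', (∑ a, π' s a * P s a s') * v s') - v s) := by
  set Q : Matrix S S ℝ := Matrix.of fun s s' => ∑ a, π' s a * P s a s' with hQdef
  have hQ0 : ∀ s s', 0 ≤ Q s s' := fun s s' =>
    Finset.sum_nonneg fun a _ => mul_nonneg (hπ'0 s a) (hP0 s a s')
  have hQ1 : ∀ s, ∑ s', Q s s' = 1 := by
    intro s
    simp only [hQdef, Matrix.of_apply]
    rw [Finset.sum_comm]
    simp_rw [← Finset.mul_sum, hP1]
    simpa using hπ'1 s
  set M : Matrix S S ℝ := 1 - γ • Q with hMdef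
  have hdet : IsUnit M.det := isUnit_iff_ne_zero.2
    (det_one_sub_smul_stochastic_ne_zero Q hQ0 hQ1 hγ0.le hγ1)
  set w : S → ℝ := fun s => v' s - v s with hwdef
  set c : S → ℝ := fun s => ((∑ a, π' s a * R s a)
      + γ * ∑ s', (∑ a, π' s a * P s a s') * v s') - v s with hcdef
  have hMw : M.mulVec w = c := by
    funext s
    simp only [hMdef, Matrix.sub_mulVec, Matrix.smul_mulVec, Matrix.one_mulVec,
      Pi.sub_apply, Pi.smul_apply, smul_eq_mul, hwdef, hcdef]
    simp only [Matrix.mulVec, dotProduct, hQdef, Matrix.of_apply]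
    have hexp : ∀ (u : S → ℝ), ∑ s', (∑ a, π' s a * P s a s') * (v' s' - u s')
        = (∑ s', (∑ a, π' s a * P s a s') * v' s')
          - ∑ s', (∑ a, π' s a * P s a s') * u s' := by
      intro u; rw [← Finset.sum_sub_distrib]; congr 1; funext s'; ring
    rw [hexp v]
    linarith [hv' s]
  have hw : w = M⁻¹.mulVec c := by
    rw [← hMw, Matrix.mulVec_mulVec, Matrix.nonsing_inv_mul M hdet, Matrix.one_mulVec]
  have hμw : ∑ s, μ s * w s = dotProduct (Matrix.vecMul μ M⁻¹) c := by
    rw [hw, ← Matrix.dotProduct_mulVec]; rfl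
  have h1γ : (1 : ℝ) - γ ≠ 0 := by linarith
  calc ∑ s, μ s * (v' s - v s) = dotProduct (Matrix.vecMul μ M⁻¹) c := hμw
    _ = (1 / (1 - γ)) * ∑ s, d s * c s := by
        rw [hd]
        simp only [dotProduct, Pi.smul_apply, smul_eq_mul, Finset.mul_sum]
        congr 1; funext s
        field_simp
end

section
/- Proxy bound for residual policy search: for any policy π and distributions μ, ν on states, ‖v_* − v_π‖_{1,μ} ≤ (1/(1−γ)) · ‖d_{μ,π_*}/ν‖_∞ · ‖T_* v_π − v_π‖_{1,ν}, where π_* is an optimal policy. -/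
open Finset

/-- If `(I - γQ) x ≥ 0` componentwise for a row-stochastic `Q`, then `x ≥ 0`. -/
lemma mdp_nonneg_aux {S : Type*} [Fintype S]
    (Q : S → S → ℝ) (hQ0 : ∀ s s', 0 ≤ Q s s') (hQ1 : ∀ s, ∑ s', Q s s' = 1)
    (γ : ℝ) (hγ0 : 0 ≤ γ) (hγ1 : γ < 1)
    (x : S → ℝ) (h : ∀ s, 0 ≤ x s - γ * ∑ s', Q s s' * x s') : ∀ s, 0 ≤ x s := by
  intro s
  obtain ⟨s₀, -, hmin⟩ := Finset.exists_min_image Finset.univ x ⟨s, Finset.mem_univ s⟩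
  have h1 : ∑ s', Q s₀ s' * x s₀ ≤ ∑ s', Q s₀ s' * x s' :=
    Finset.sum_le_sum fun i _ => mul_le_mul_of_nonneg_left (hmin i (mem_univ i)) (hQ0 s₀ i)
  have h2 : ∑ s', Q s₀ s' * x s₀ = x s₀ := by
    rw [← Finset.sum_mul, hQ1 s₀, one_mul]
  have h3 := h s₀
  have h4 : 0 ≤ x s₀ := by nlinarith [mul_le_mul_of_nonneg_left h1 hγ0]
  exact le_trans h4 (hmin s (mem_univ s))

lemma mdp_avg_le_sup {A : Type*} [Fintype A] [Nonempty A]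
    (p : A → ℝ) (hp0 : ∀ a, 0 ≤ p a) (hp1 : ∑ a, p a = 1) (f : A → ℝ) :
    ∑ a, p a * f a ≤ Finset.univ.sup' Finset.univ_nonempty f := by
  calc ∑ a, p a * f a
      ≤ ∑ a, p a * Finset.univ.sup' Finset.univ_nonempty f :=
        Finset.sum_le_sum fun a _ =>
          mul_le_mul_of_nonneg_left (Finset.le_sup' f (mem_univ a)) (hp0 a)
    _ = Finset.univ.sup' Finset.univ_nonempty f := by rw [← Finset.sum_mul, hp1, one_mul]

lemma mdp_expand_avg {S A : Type*} [Fintype S] [Fintype A]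
    (p : A → ℝ) (R : A → ℝ) (P : A → S → ℝ) (γ : ℝ) (f : S → ℝ) :
    ∑ a, p a * (R a + γ * ∑ s', P a s' * f s')
      = (∑ a, p a * R a) + γ * ∑ s', (∑ a, p a * P a s') * f s' := by
  simp only [mul_add, Finset.sum_add_distrib, Finset.mul_sum, Finset.sum_mul]
  congr 1
  rw [Finset.sum_comm]
  apply Finset.sum_congr rfl
  intro s' _
  apply Finset.sum_congr rfl
  intro a _
  ring

/-- proxy bound for residual policy search:
`‖v_* − v_π‖_{1,μ} ≤ (1/(1−γ)) ‖d_{μ,π_*}/ν‖_∞ ‖T_* v_π − v_π‖_{1,ν}`. -/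
theorem residual_proxy_bound
    {S A : Type*} [Fintype S] [Fintype A] [Nonempty A] [DecidableEq S]
    (P : S → A → S → ℝ) (hP0 : ∀ s a s', 0 ≤ P s a s')
    (hP1 : ∀ s a, ∑ s', P s a s' = 1)
    (R : S → A → ℝ) (γ : ℝ) (hγ0 : 0 < γ) (hγ1 : γ < 1)
    -- the policy π and its value function v
    (π : S → A → ℝ) (hπ0 : ∀ s a, 0 ≤ π s a) (hπ1 : ∀ s, ∑ a, π s a = 1)
    (v : S → ℝ)
    (hv : ∀ s, v s = (∑ a, π s a * R s a)
        + γ * ∑ s', (∑ a, π s a * P s a s') * v s')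
    -- an optimal policy π_* whose value vstar is the fixed point of T_*
    (πstar : S → A → ℝ) (hπs0 : ∀ s a, 0 ≤ πstar s a) (hπs1 : ∀ s, ∑ a, πstar s a = 1)
    (vstar : S → ℝ)
    (hvs : ∀ s, vstar s = (∑ a, πstar s a * R s a)
        + γ * ∑ s', (∑ a, πstar s a * P s a s') * vstar s')
    (hvsopt : ∀ s, vstar s = Finset.univ.sup' Finset.univ_nonempty
        (fun a => R s a + γ * ∑ s', P s a s' * vstar s'))
    -- distributions μ and ν
    (μ : S → ℝ) (hμ0 : ∀ s, 0 ≤ μ s) (hμ1 : ∑ s, μ s = 1)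
    (ν : S → ℝ) (hν0 : ∀ s, 0 ≤ ν s) (hν1 : ∑ s, ν s = 1)
    -- the occupancy measure d_{μ,π_*}
    (d : S → ℝ)
    (hd : d = (1 - γ) • Matrix.vecMul μ
        (1 - γ • Matrix.of fun s s' => ∑ a, πstar s a * P s a s')⁻¹)
    -- the concentrability coefficient C = ‖d_{μ,π_*}/ν‖_∞ (smallest such constant)
    (C : ℝ) (hC : IsLeast {c : ℝ | ∀ s, d s ≤ c * ν s} C) :
    ∑ s, μ s * |vstar s - v s|
      ≤ (1 / (1 - γ)) * C *
        ∑ s, ν s * |Finset.univ.sup' Finset.univ_nonempty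
          (fun a => R s a + γ * ∑ s', P s a s' * v s') - v s| := by
  have hγ1' : (0:ℝ) < 1 - γ := by linarith
  set Pm : Matrix S S ℝ := Matrix.of fun s s' => ∑ a, πstar s a * P s a s' with hPmdef
  have hPmapp : ∀ s s', Pm s s' = ∑ a, πstar s a * P s a s' := fun s s' => rfl
  have hPm0 : ∀ s s', 0 ≤ Pm s s' := fun s s' =>
    Finset.sum_nonneg fun a _ => mul_nonneg (hπs0 s a) (hP0 s a s')
  have hPm1 : ∀ s, ∑ s', Pm s s' = 1 := by
    intro s
    have h : ∑ s', ∑ a, πstar s a * P s a s' = ∑ a, πstar s a * ∑ s', P s a s' := by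
      rw [Finset.sum_comm]
      exact Finset.sum_congr rfl fun a _ => (Finset.mul_sum _ _ _).symm
    simp only [hPmapp, h, hP1, mul_one, hπs1 s]
  set B : Matrix S S ℝ := 1 - γ • Pm with hBdef
  have hBmul : ∀ (x : S → ℝ) (s : S), B.mulVec x s = x s - γ * ∑ s', Pm s s' * x s' := by
    intro x s
    simp only [hBdef, Matrix.mulVec, dotProduct, Matrix.sub_apply,
      Matrix.smul_apply, Matrix.one_apply, smul_eq_mul, sub_mul, ite_mul, one_mul,
      zero_mul, Finset.sum_sub_distrib, Finset.sum_ite_eq, Finset.mem_univ, if_true,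
      Finset.mul_sum, mul_assoc]
  have hnn : ∀ x : S → ℝ, (∀ s, 0 ≤ B.mulVec x s) → ∀ s, 0 ≤ x s := by
    intro x hx
    exact mdp_nonneg_aux (fun s s' => Pm s s') hPm0 hPm1 γ hγ0.le hγ1 x
      (fun s => by have h := hx s; rwa [hBmul] at h)
  have hUnit : IsUnit B := by
    rw [← Matrix.mulVec_injective_iff_isUnit]
    intro x y hxy
    have hz1 : B.mulVec (x - y) = 0 := by rw [Matrix.mulVec_sub, hxy, sub_self]
    have hz2 : B.mulVec (y - x) = 0 := by rw [Matrix.mulVec_sub, hxy, sub_self]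
    have h1 := hnn (x - y) (fun s => by rw [hz1]; exact le_refl 0)
    have h2 := hnn (y - x) (fun s => by rw [hz2]; exact le_refl 0)
    funext s
    have := h1 s
    have := h2 s
    simp only [Pi.sub_apply] at *
    linarith
  have hBdet : IsUnit B.det := (Matrix.isUnit_iff_isUnit_det B).mp hUnit
  have hdB : Matrix.vecMul d B = (1 - γ) • μ := by
    rw [hd, Matrix.smul_vecMul, Matrix.vecMul_vecMul, Matrix.nonsing_inv_mul B hBdet,
      Matrix.vecMul_one]
  have hBinv0 : ∀ t s, 0 ≤ B⁻¹ t s := by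
    intro t s
    have hx : ∀ t', 0 ≤ B.mulVec (B⁻¹.mulVec (fun s' => if s' = s then 1 else 0)) t' := by
      intro t'
      rw [Matrix.mulVec_mulVec, Matrix.mul_nonsing_inv B hBdet, Matrix.one_mulVec]
      by_cases h : t' = s <;> simp [h]
    have h := hnn _ hx t
    simpa [Matrix.mulVec, dotProduct, mul_ite] using h
  have hd0 : ∀ s, 0 ≤ d s := by
    intro s
    rw [hd]
    simp only [Pi.smul_apply, smul_eq_mul, Matrix.vecMul, dotProduct]
    exact mul_nonneg hγ1'.le
      (Finset.sum_nonneg fun t _ => mul_nonneg (hμ0 t) (hBinv0 t s))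
  set w : S → ℝ := fun s => vstar s - v s with hwdef
  set r : S → ℝ := fun s => (Finset.univ.sup' Finset.univ_nonempty
      fun a => R s a + γ * ∑ s', P s a s' * v s') - v s with hrdef
  -- vstar ≥ v
  have hvsge : ∀ s, (∑ a, π s a * R s a)
      + γ * ∑ s', (∑ a, π s a * P s a s') * vstar s' ≤ vstar s := by
    intro s
    rw [hvsopt s, ← mdp_expand_avg]
    exact mdp_avg_le_sup (π s) (hπ0 s) (hπ1 s) _
  have hw0 : ∀ s, 0 ≤ w s := by
    apply mdp_nonneg_aux (fun s s' => ∑ a, π s a * P s a s')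
      (fun s s' => Finset.sum_nonneg fun a _ => mul_nonneg (hπ0 s a) (hP0 s a s'))
      (fun s => by
        rw [Finset.sum_comm]
        calc ∑ a, ∑ s', π s a * P s a s' = ∑ a, π s a * ∑ s', P s a s' :=
              Finset.sum_congr rfl fun a _ => (Finset.mul_sum _ _ _).symm
          _ = 1 := by simp [hP1, hπ1 s])
      γ hγ0.le hγ1
    intro s
    have hsplit : ∑ s', (∑ a, π s a * P s a s') * w s'
        = (∑ s', (∑ a, π s a * P s a s') * vstar s')
          - ∑ s', (∑ a, π s a * P s a s') * v s' := by
      rw [← Finset.sum_sub_distrib]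
      exact Finset.sum_congr rfl fun s' _ => by simp [hwdef]; ring
    simp only [hwdef]
    rw [hsplit, mul_sub]
    have h1 := hvsge s
    have h2 := hv s
    linarith
  have hr0 : ∀ s, 0 ≤ r s := by
    intro s
    have h1 : ∑ a, π s a * (R s a + γ * ∑ s', P s a s' * v s')
        ≤ Finset.univ.sup' Finset.univ_nonempty
          fun a => R s a + γ * ∑ s', P s a s' * v s' :=
      mdp_avg_le_sup (π s) (hπ0 s) (hπ1 s) _
    rw [mdp_expand_avg] at h1
    have h2 := hv s
    simp only [hrdef]
    linarith
  have hBw : ∀ s, B.mulVec w s ≤ r s := by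
    intro s
    rw [hBmul]
    have hsplit : ∑ s', Pm s s' * w s'
        = (∑ s', Pm s s' * vstar s') - ∑ s', Pm s s' * v s' := by
      rw [← Finset.sum_sub_distrib]
      exact Finset.sum_congr rfl fun s' _ => by simp [hwdef]; ring
    have h1 : ∑ a, πstar s a * (R s a + γ * ∑ s', P s a s' * v s')
        ≤ Finset.univ.sup' Finset.univ_nonempty
          fun a => R s a + γ * ∑ s', P s a s' * v s' :=
      mdp_avg_le_sup (πstar s) (hπs0 s) (hπs1 s) _
    rw [mdp_expand_avg] at h1
    have h2 := hvs s
    simp only [hwdef, hrdef]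
    rw [hsplit, mul_sub]
    simp only [hPmapp]
    linarith
  -- main chain
  have key : (1 - γ) * ∑ s, μ s * w s ≤ C * ∑ s, ν s * r s := by
    have e1 : (1 - γ) * ∑ s, μ s * w s = ∑ s, d s * B.mulVec w s := by
      calc (1 - γ) * ∑ s, μ s * w s = dotProduct ((1 - γ) • μ) w := by
            simp [dotProduct, Finset.mul_sum, mul_assoc]
        _ = dotProduct (Matrix.vecMul d B) w := by rw [hdB]
        _ = dotProduct d (B.mulVec w) := (Matrix.dotProduct_mulVec d B w).symm
        _ = ∑ s, d s * B.mulVec w s := rfl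
    rw [e1]
    calc ∑ s, d s * B.mulVec w s ≤ ∑ s, d s * r s :=
          Finset.sum_le_sum fun s _ => mul_le_mul_of_nonneg_left (hBw s) (hd0 s)
      _ ≤ ∑ s, (C * ν s) * r s :=
          Finset.sum_le_sum fun s _ => mul_le_mul_of_nonneg_right (hC.1 s) (hr0 s)
      _ = C * ∑ s, ν s * r s := by
          rw [Finset.mul_sum]
          exact Finset.sum_congr rfl fun s _ => by ring
  have habs1 : ∑ s, μ s * |vstar s - v s| = ∑ s, μ s * w s :=
    Finset.sum_congr rfl fun s _ => by
      rw [show vstar s - v s = w s from rfl, abs_of_nonneg (hw0 s)]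
  have habs2 : ∑ s, ν s * |(Finset.univ.sup' Finset.univ_nonempty
      fun a => R s a + γ * ∑ s', P s a s' * v s') - v s| = ∑ s, ν s * r s :=
    Finset.sum_congr rfl fun s _ => by
      rw [show (Finset.univ.sup' Finset.univ_nonempty
        fun a => R s a + γ * ∑ s', P s a s' * v s') - v s = r s from rfl,
        abs_of_nonneg (hr0 s)]
  rw [habs1]
  calc ∑ s, μ s * w s ≤ (1 / (1 - γ)) * (C * ∑ s, ν s * r s) := by
        rw [div_mul_eq_mul_div, one_mul, le_div_iff₀ hγ1', mul_comm]
        exact key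
    _ = (1 / (1 - γ)) * C * ∑ s, ν s * r s := by ring
    _ = (1 / (1 - γ)) * C * ∑ s, ν s * |(Finset.univ.sup' Finset.univ_nonempty
          fun a => R s a + γ * ∑ s', P s a s' * v s') - v s| := by rw [habs2]
end

section
/- For any policies π, π' and distribution μ, we have μ(v_{π'} − v_π) ≤ (1/(1−γ)) d_{μ,π'} (T_* v_π − v_π). -/
open Matrix Finset

section aux
variable {S : Type*} [Fintype S] [DecidableEq S]

lemma stoch_det_unit (Q : Matrix S S ℝ) (hQ0 : ∀ s s', 0 ≤ Q s s')
    (hQ1 : ∀ s, ∑ s', Q s s' = 1) (γ : ℝ) (hγ0 : 0 ≤ γ) (hγ1 : γ < 1) :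
    IsUnit (1 - γ • Q).det := by
  have hdet : (1 - γ • Q).det ≠ 0 := by
    apply det_ne_zero_of_sum_row_lt_diag
    intro k
    have h1 : ∀ j ∈ Finset.univ.erase k, ‖(1 - γ • Q) k j‖ = γ * Q k j := by
      intro j hj
      have : (1 - γ • Q) k j = -(γ * Q k j) := by
        simp [Matrix.sub_apply, Matrix.one_apply_ne' (Finset.ne_of_mem_erase hj)]
      rw [this, norm_neg, Real.norm_of_nonneg (mul_nonneg hγ0 (hQ0 k j))]
    rw [Finset.sum_congr rfl h1]
    have hkk : (1 - γ • Q) k k = 1 - γ * Q k k := by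
      simp [Matrix.sub_apply, Matrix.one_apply_eq]
    have hsum : ∑ j ∈ Finset.univ.erase k, γ * Q k j = γ * (1 - Q k k) := by
      rw [← Finset.mul_sum]
      congr 1
      have := hQ1 k
      rw [← Finset.add_sum_erase _ _ (Finset.mem_univ k)] at this
      linarith
    rw [hsum, hkk]
    have hQkk1 : Q k k ≤ 1 := by
      have := hQ1 k
      have h2 : ∑ j ∈ Finset.univ.erase k, Q k j ≥ 0 :=
        Finset.sum_nonneg fun j _ => hQ0 k j
      rw [← Finset.add_sum_erase _ _ (Finset.mem_univ k)] at this
      linarith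
    have hpos : 0 < 1 - γ * Q k k := by nlinarith [hQ0 k k]
    rw [Real.norm_of_nonneg (le_of_lt hpos)]
    nlinarith
  exact isUnit_iff_ne_zero.mpr hdet

lemma stoch_pow_nonneg (Q : Matrix S S ℝ) (hQ0 : ∀ s s', 0 ≤ Q s s')
    (hQ1 : ∀ s, ∑ s', Q s s' = 1) (n : ℕ) :
    (∀ s s', 0 ≤ (Q ^ n) s s') ∧ (∀ s, ∑ s', (Q ^ n) s s' = 1) := by
  induction n with
  | zero => constructor <;> intros <;> simp [Matrix.one_apply] <;> positivity
  | succ n ih =>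
    constructor
    · intro s s'
      rw [pow_succ, Matrix.mul_apply]
      exact Finset.sum_nonneg fun t _ => mul_nonneg (ih.1 s t) (hQ0 t s')
    · intro s
      simp_rw [pow_succ, Matrix.mul_apply]
      rw [Finset.sum_comm]
      simp_rw [← Finset.mul_sum, hQ1]
      simpa using ih.2 s

lemma stoch_inv_nonneg (Q : Matrix S S ℝ) (hQ0 : ∀ s s', 0 ≤ Q s s')
    (hQ1 : ∀ s, ∑ s', Q s s' = 1) (γ : ℝ) (hγ0 : 0 ≤ γ) (hγ1 : γ < 1) :
    ∀ s s', 0 ≤ (1 - γ • Q)⁻¹ s s' := by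
  intro s s'
  set M := 1 - γ • Q with hM
  have hdet := stoch_det_unit Q hQ0 hQ1 γ hγ0 hγ1
  have key : ∀ n : ℕ, M⁻¹ = (∑ k ∈ Finset.range n, (γ • Q) ^ k) + (γ • Q) ^ n * M⁻¹ := by
    intro n
    have geom : (∑ k ∈ Finset.range n, (γ • Q) ^ k) * (γ • Q - 1) = (γ • Q) ^ n - 1 :=
      geom_sum_mul _ n
    have h2 : (∑ k ∈ Finset.range n, (γ • Q) ^ k) * M = 1 - (γ • Q) ^ n := by
      have hM' : M = -(γ • Q - 1) := by rw [hM, neg_sub]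
      rw [hM', mul_neg, geom, neg_sub]
    calc M⁻¹ = 1 * M⁻¹ := (one_mul _).symm
      _ = ((∑ k ∈ Finset.range n, (γ • Q) ^ k) * M + (γ • Q) ^ n) * M⁻¹ := by
          rw [h2, sub_add_cancel]
      _ = (∑ k ∈ Finset.range n, (γ • Q) ^ k) * (M * M⁻¹) + (γ • Q) ^ n * M⁻¹ := by
          rw [add_mul, mul_assoc]
      _ = _ := by rw [Matrix.mul_nonsing_inv _ hdet, mul_one]
  -- bound
  set C := ∑ t : S, |M⁻¹ t s'| with hC
  have hbound : ∀ n : ℕ, -(γ ^ n * C) ≤ M⁻¹ s s' := by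
    intro n
    have hpow : (γ • Q) ^ n = γ ^ n • Q ^ n := by rw [smul_pow]
    have h1 : 0 ≤ (∑ k ∈ Finset.range n, (γ • Q) ^ k) s s' := by
      rw [Matrix.sum_apply]
      apply Finset.sum_nonneg
      intro k _
      rw [smul_pow, Matrix.smul_apply, smul_eq_mul]
      exact mul_nonneg (pow_nonneg hγ0 k) ((stoch_pow_nonneg Q hQ0 hQ1 k).1 s s')
    have h2 : -(γ ^ n * C) ≤ ((γ • Q) ^ n * M⁻¹) s s' := by
      rw [Matrix.mul_apply, hpow]
      have : ∀ t ∈ Finset.univ, -(γ ^ n * |M⁻¹ t s'|) ≤ (γ ^ n • Q ^ n) s t * M⁻¹ t s' := by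
        intro t _
        rw [Matrix.smul_apply, smul_eq_mul]
        have hq01 : 0 ≤ (Q ^ n) s t ∧ (Q ^ n) s t ≤ 1 := by
          refine ⟨(stoch_pow_nonneg Q hQ0 hQ1 n).1 s t, ?_⟩
          have := (stoch_pow_nonneg Q hQ0 hQ1 n).2 s
          calc (Q ^ n) s t ≤ ∑ s', (Q ^ n) s s' :=
                Finset.single_le_sum (fun i _ => (stoch_pow_nonneg Q hQ0 hQ1 n).1 s i)
                  (Finset.mem_univ t)
            _ = 1 := this
        have habs : |γ ^ n * (Q ^ n) s t * M⁻¹ t s'| ≤ γ ^ n * |M⁻¹ t s'| := by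
          rw [abs_mul, abs_mul, abs_pow, abs_of_nonneg hγ0, abs_of_nonneg hq01.1]
          calc γ ^ n * (Q ^ n) s t * |M⁻¹ t s'| ≤ γ ^ n * 1 * |M⁻¹ t s'| := by
                apply mul_le_mul_of_nonneg_right _ (abs_nonneg _)
                exact mul_le_mul_of_nonneg_left hq01.2 (pow_nonneg hγ0 n)
            _ = γ ^ n * |M⁻¹ t s'| := by ring
        have := neg_abs_le (γ ^ n * (Q ^ n) s t * M⁻¹ t s')
        linarith
      calc -(γ ^ n * C) = ∑ t : S, -(γ ^ n * |M⁻¹ t s'|) := by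
            rw [hC, Finset.mul_sum, ← Finset.sum_neg_distrib]
        _ ≤ _ := Finset.sum_le_sum this
    have := key n
    have heq : M⁻¹ s s' = (∑ k ∈ Finset.range n, (γ • Q) ^ k) s s' + ((γ • Q) ^ n * M⁻¹) s s' := by
      conv_lhs => rw [this]
      simp [Matrix.add_apply]
    linarith
  -- limit
  have htend : Filter.Tendsto (fun n : ℕ => -(γ ^ n * C)) Filter.atTop (nhds 0) := by
    have := tendsto_pow_atTop_nhds_zero_of_lt_one hγ0 hγ1
    have h2 : Filter.Tendsto (fun n : ℕ => γ ^ n * C) Filter.atTop (nhds (0 * C)) :=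
      this.mul_const C
    rw [zero_mul] at h2
    simpa using h2.neg
  exact le_of_tendsto_of_tendsto' htend tendsto_const_nhds hbound

end aux

/-- `μ(v_{π'} − v_π) ≤ (1/(1−γ)) d_{μ,π'} (T_* v_π − v_π)`. -/
theorem mean_value_difference_le_occupancy_residual
    {S A : Type*} [Fintype S] [Fintype A] [Nonempty A] [DecidableEq S]
    (P : S → A → S → ℝ) (hP0 : ∀ s a s', 0 ≤ P s a s')
    (hP1 : ∀ s a, ∑ s', P s a s' = 1)
    (R : S → A → ℝ) (γ : ℝ) (hγ0 : 0 < γ) (hγ1 : γ < 1)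
    (π π' : S → A → ℝ)
    (hπ0 : ∀ s a, 0 ≤ π s a) (hπ1 : ∀ s, ∑ a, π s a = 1)
    (hπ'0 : ∀ s a, 0 ≤ π' s a) (hπ'1 : ∀ s, ∑ a, π' s a = 1)
    (v v' : S → ℝ)
    (hv : ∀ s, v s = (∑ a, π s a * R s a)
        + γ * ∑ s', (∑ a, π s a * P s a s') * v s')
    (hv' : ∀ s, v' s = (∑ a, π' s a * R s a)
        + γ * ∑ s', (∑ a, π' s a * P s a s') * v' s')
    (μ : S → ℝ) (hμ0 : ∀ s, 0 ≤ μ s) (hμ1 : ∑ s, μ s = 1)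
    (d : S → ℝ)
    (hd : d = (1 - γ) • Matrix.vecMul μ
        (1 - γ • Matrix.of fun s s' => ∑ a, π' s a * P s a s')⁻¹) :
    ∑ s, μ s * (v' s - v s)
      ≤ (1 / (1 - γ)) * ∑ s, d s *
          (Finset.univ.sup' Finset.univ_nonempty
            (fun a => R s a + γ * ∑ s', P s a s' * v s') - v s) := by
  set Q : Matrix S S ℝ := Matrix.of fun s s' => ∑ a, π' s a * P s a s' with hQdef
  have hQ0 : ∀ s s', 0 ≤ Q s s' := fun s s' =>
    Finset.sum_nonneg fun a _ => mul_nonneg (hπ'0 s a) (hP0 s a s')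
  have hQ1 : ∀ s, ∑ s', Q s s' = 1 := by
    intro s
    show ∑ s', ∑ a, π' s a * P s a s' = 1
    rw [Finset.sum_comm]
    simp_rw [← Finset.mul_sum, hP1]
    simpa using hπ'1 s
  set M : Matrix S S ℝ := 1 - γ • Q with hMdef
  have hdet : IsUnit M.det := stoch_det_unit Q hQ0 hQ1 γ hγ0.le hγ1
  have hinv : ∀ s s', 0 ≤ M⁻¹ s s' := stoch_inv_nonneg Q hQ0 hQ1 γ hγ0.le hγ1
  set w : S → ℝ := fun s => v' s - v s with hwdef
  set u : S → ℝ := fun s =>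
    (∑ a, π' s a * R s a) + γ * ∑ s', Q s s' * v s' - v s with hudef
  have hMw : M *ᵥ w = u := by
    funext s
    have hms : (M *ᵥ w) s = w s - γ * ∑ s', Q s s' * w s' := by
      simp only [Matrix.mulVec, dotProduct, hMdef, Matrix.sub_apply,
        Matrix.smul_apply, Matrix.one_apply, smul_eq_mul]
      rw [Finset.sum_congr rfl (fun s' _ => sub_mul _ _ _), Finset.sum_sub_distrib]
      congr 1
      · simp [ite_mul]
      · rw [Finset.mul_sum]
        exact Finset.sum_congr rfl fun s' _ => by ring
    rw [hms]
    have h1 : v' s - γ * ∑ s', Q s s' * v' s' = ∑ a, π' s a * R s a := by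
      have := hv' s
      rw [hQdef]
      simp only [Matrix.of_apply]
      linarith
    simp only [hwdef, hudef]
    have hsplit : ∑ s', Q s s' * (v' s' - v s') =
        (∑ s', Q s s' * v' s') - ∑ s', Q s s' * v s' := by
      rw [← Finset.sum_sub_distrib]
      exact Finset.sum_congr rfl fun s' _ => by ring
    rw [hsplit]
    linarith
  have hw : w = M⁻¹ *ᵥ u := by
    have := congrArg (fun x => M⁻¹ *ᵥ x) hMw
    simpa [Matrix.mulVec_mulVec, Matrix.nonsing_inv_mul M hdet] using this
  -- LHS as dot product
  have hLHS : ∑ s, μ s * (v' s - v s) = ∑ s, (Matrix.vecMul μ M⁻¹) s * u s := by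
    calc ∑ s, μ s * (v' s - v s) = μ ⬝ᵥ w := rfl
      _ = μ ⬝ᵥ (M⁻¹ *ᵥ u) := by rw [hw]
      _ = (Matrix.vecMul μ M⁻¹) ⬝ᵥ u := Matrix.dotProduct_mulVec μ M⁻¹ u
      _ = _ := rfl
  have hγpos : 0 < 1 - γ := by linarith
  have hdnn : ∀ s, 0 ≤ d s := by
    intro s
    rw [hd]
    simp only [Pi.smul_apply, smul_eq_mul]
    apply mul_nonneg hγpos.le
    exact Finset.sum_nonneg fun t _ => mul_nonneg (hμ0 t) (hinv t s)
  have hdm : ∀ s, (Matrix.vecMul μ M⁻¹) s = (1 / (1 - γ)) * d s := by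
    intro s
    rw [hd]
    simp only [Pi.smul_apply, smul_eq_mul]
    field_simp
  -- u s ≤ residual s
  have hures : ∀ s, u s ≤ (Finset.univ.sup' Finset.univ_nonempty
      (fun a => R s a + γ * ∑ s', P s a s' * v s') - v s) := by
    intro s
    simp only [hudef]
    have heq : (∑ a, π' s a * R s a) + γ * ∑ s', Q s s' * v s'
        = ∑ a, π' s a * (R s a + γ * ∑ s', P s a s' * v s') := by
      simp only [hQdef, Matrix.of_apply, mul_add]
      rw [Finset.sum_add_distrib]
      congr 1
      rw [Finset.mul_sum]
      simp_rw [Finset.sum_mul, Finset.mul_sum]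
      rw [Finset.sum_comm]
      apply Finset.sum_congr rfl; intro a _
      apply Finset.sum_congr rfl; intro s' _
      ring
    have hle : ∑ a, π' s a * (R s a + γ * ∑ s', P s a s' * v s')
        ≤ Finset.univ.sup' Finset.univ_nonempty
            (fun a => R s a + γ * ∑ s', P s a s' * v s') := by
      calc ∑ a, π' s a * (R s a + γ * ∑ s', P s a s' * v s')
          ≤ ∑ a, π' s a * Finset.univ.sup' Finset.univ_nonempty
              (fun a => R s a + γ * ∑ s', P s a s' * v s') := by
            apply Finset.sum_le_sum
            intro a _
            exact mul_le_mul_of_nonneg_left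
              (Finset.le_sup' (f := fun a => R s a + γ * ∑ s', P s a s' * v s') (Finset.mem_univ a)) (hπ'0 s a)
        _ = _ := by rw [← Finset.sum_mul, hπ'1, one_mul]
    linarith [heq ▸ hle]
  -- combine
  rw [hLHS]
  have : ∑ s, (Matrix.vecMul μ M⁻¹) s * u s
      = (1 / (1 - γ)) * ∑ s, d s * u s := by
    rw [Finset.mul_sum]
    exact Finset.sum_congr rfl fun s _ => by rw [hdm s]; ring
  rw [this]
  apply mul_le_mul_of_nonneg_left _ (by positivity)
  exact Finset.sum_le_sum fun s _ => mul_le_mul_of_nonneg_left (hures s) (hdnn s)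
end
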